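/- arXiv:2601.19511 — 6 statements merged into one kernel-verified Lean document; each statement's English description precedes it below -/
import Mathlib

section
/- Let I be a nonempty index set and for each α ∈ I let 𝒞_α ⊆ 𝒳 be 𝒫-sensitive with reduction set 𝒬_α ⊆ 𝔓_c(Ω). Then the intersection 𝒞 := ⋂_{α ∈ I} 𝒞_α is 𝒫-sensitive with reduction set 𝒬 := ⋃_{α ∈ I} 𝒬_α. -/
open MeasureTheory Filter Set

variable {Ω : Type*} [MeasurableSpace Ω]

/-- Quasi-sure equality with respect to a family of measures. -/
def QSEq (𝔓 : Set (Measure Ω)) (x y : Ω → ℝ) : Prop := ∀ P ∈ 𝔓, x =ᵐ[P] y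

def qsSetoid (𝔓 : Set (Measure Ω)) : Setoid (Ω → ℝ) where
  r := QSEq 𝔓
  iseqv := ⟨fun _ _ _ => EventuallyEq.refl _ _,
    fun h P hP => (h P hP).symm,
    fun h1 h2 P hP => (h1 P hP).trans (h2 P hP)⟩

/-- The robust space `L⁰_c`. -/
def L0c (𝔓 : Set (Measure Ω)) := Quotient (qsSetoid 𝔓)

def aeSetoid (Q : Measure Ω) : Setoid (Ω → ℝ) where
  r x y := x =ᵐ[Q] y
  iseqv := ⟨fun _ => EventuallyEq.refl _ _, EventuallyEq.symm, EventuallyEq.trans⟩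

/-- The space `L⁰_Q` for a single measure. -/
def L0 (Q : Measure Ω) := Quotient (aeSetoid Q)

/-- Probability measures dominated by the family `𝔓` (vanishing on `𝔓`-polar sets). -/
def Pc (𝔓 : Set (Measure Ω)) : Set (Measure Ω) :=
  {Q | IsProbabilityMeasure Q ∧ ∀ N : Set Ω, (∀ P ∈ 𝔓, P N = 0) → Q N = 0}

abbrev PcM (𝔓 : Set (Measure Ω)) := {Q : Measure Ω // Q ∈ Pc 𝔓}

theorem QSEq.aeEq {𝔓 : Set (Measure Ω)} (Q : PcM 𝔓) {x y : Ω → ℝ}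
    (h : QSEq 𝔓 x y) : x =ᵐ[Q.1] y :=
  ae_iff.2 (Q.2.2 _ fun P hP => ae_iff.1 (h P hP))

/-- The map `j_Q : L⁰_c → L⁰_Q`. -/
def jQ {𝔓 : Set (Measure Ω)} (Q : PcM 𝔓) : L0c 𝔓 → L0 Q.1 :=
  Quotient.lift (fun x => Quotient.mk (aeSetoid Q.1) x)
    (fun _ _ h => Quotient.sound (h.aeEq Q))

/-- The `𝔓`-quasi-sure order on `L⁰_c`. -/
def qsLe {𝔓 : Set (Measure Ω)} : L0c 𝔓 → L0c 𝔓 → Prop :=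
  Quotient.lift₂ (fun x y => ∀ P ∈ 𝔓, x ≤ᵐ[P] y)
    (fun _ _ _ _ ha hb => propext
      ⟨fun h P hP => ((ha P hP).symm.le.trans (h P hP)).trans (hb P hP).le,
       fun h P hP => ((ha P hP).le.trans (h P hP)).trans (hb P hP).symm.le⟩)

/-- The `Q`-a.s. order on `L⁰_c`, for `Q ∈ 𝔓_c(Ω)`. -/
def qLe {𝔓 : Set (Measure Ω)} (Q : PcM 𝔓) : L0c 𝔓 → L0c 𝔓 → Prop :=
  Quotient.lift₂ (fun x y => x ≤ᵐ[Q.1] y)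
    (fun _ _ _ _ ha hb => propext
      ⟨fun h => (((ha.aeEq Q).symm.le.trans h)).trans (hb.aeEq Q).le,
       fun h => (((ha.aeEq Q).le.trans h)).trans (hb.aeEq Q).symm.le⟩)

def L0c.add {𝔓 : Set (Measure Ω)} : L0c 𝔓 → L0c 𝔓 → L0c 𝔓 :=
  Quotient.map₂ (fun x y ω => x ω + y ω)
    (fun _ _ ha _ _ hb P hP => by filter_upwards [ha P hP, hb P hP] with ω h1 h2; simp [h1, h2])

def L0c.const (𝔓 : Set (Measure Ω)) (m : ℝ) : L0c 𝔓 := Quotient.mk (qsSetoid 𝔓) (fun _ => m)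

def L0c.smul {𝔓 : Set (Measure Ω)} (c : ℝ) : L0c 𝔓 → L0c 𝔓 :=
  Quotient.map (fun x ω => c * x ω)
    (fun _ _ ha P hP => by filter_upwards [ha P hP] with ω h1; simp [h1])

def L0c.abs {𝔓 : Set (Measure Ω)} : L0c 𝔓 → L0c 𝔓 :=
  Quotient.map (fun x ω => |x ω|)
    (fun _ _ ha P hP => by filter_upwards [ha P hP] with ω h1; simp [h1])

/-- Multiplication by the indicator of a set `A`. -/
noncomputable def L0c.mulInd {𝔓 : Set (Measure Ω)} (A : Set Ω) : L0c 𝔓 → L0c 𝔓 :=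
  Quotient.map (fun x => A.indicator x)
    (fun _ _ ha P hP => by
      filter_upwards [ha P hP] with ω h1
      by_cases h : ω ∈ A <;> simp [Set.indicator, h, h1])

/-- The class of the indicator function of `A`. -/
noncomputable def L0c.ind (𝔓 : Set (Measure Ω)) (A : Set Ω) : L0c 𝔓 :=
  Quotient.mk (qsSetoid 𝔓) (A.indicator fun _ => (1 : ℝ))

/-- The bounded elements: `L^∞_c`. -/
def Linftyc (𝔓 : Set (Measure Ω)) : Set (L0c 𝔓) :=
  {X | ∃ m : ℝ, 0 < m ∧ qsLe X.abs (L0c.const 𝔓 m)}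

/-- Expectation under `R ∈ 𝔓_c(Ω)`. -/
noncomputable def expct {𝔓 : Set (Measure Ω)} (R : PcM 𝔓) : L0c 𝔓 → ℝ :=
  Quotient.lift (fun x => integral R.1 (fun ω => x ω))
    (fun _ _ h => integral_congr_ae (h.aeEq R))

/-- `𝒬` is a reduction set for `𝒞 ⊆ 𝒳`. -/
def IsReductionSet (𝔓 : Set (Measure Ω)) (𝒳 𝒞 : Set (L0c 𝔓)) (𝒬 : Set (PcM 𝔓)) : Prop :=
  𝒬.Nonempty ∧ ∀ X ∈ 𝒳, (X ∈ 𝒞 ↔ ∀ Q ∈ 𝒬, jQ Q X ∈ jQ Q '' 𝒞)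

/-- `𝒞 ⊆ 𝒳` is `𝔓`-sensitive. -/
def PSensitive (𝔓 : Set (Measure Ω)) (𝒳 𝒞 : Set (L0c 𝔓)) : Prop :=
  𝒞 = ∅ ∨ ∀ X ∈ 𝒳, (X ∈ 𝒞 ↔ ∀ Q : PcM 𝔓, jQ Q X ∈ jQ Q '' 𝒞)

theorem inter_pSensitive {Ω : Type*} [MeasurableSpace Ω]
    (𝔓 : Set (Measure Ω)) (h𝔓 : 𝔓.Nonempty) (hprob : ∀ P ∈ 𝔓, IsProbabilityMeasure P)
    (𝒳 : Set (L0c 𝔓)) (h𝒳 : 𝒳.Nonempty)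
    (I : Type*) [Nonempty I] (𝒞 : I → Set (L0c 𝔓)) (h𝒞𝒳 : ∀ α, 𝒞 α ⊆ 𝒳)
    (hsens : ∀ α, PSensitive 𝔓 𝒳 (𝒞 α))
    (𝒬 : I → Set (PcM 𝔓)) (hred : ∀ α, IsReductionSet 𝔓 𝒳 (𝒞 α) (𝒬 α)) :
    PSensitive 𝔓 𝒳 (⋂ α, 𝒞 α) ∧ IsReductionSet 𝔓 𝒳 (⋂ α, 𝒞 α) (⋃ α, 𝒬 α) := by
  have key : ∀ X ∈ 𝒳, (∀ Q ∈ ⋃ α, 𝒬 α, jQ Q X ∈ jQ Q '' (⋂ α, 𝒞 α)) → X ∈ ⋂ α, 𝒞 α := by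
    intro X hX h
    refine Set.mem_iInter.2 fun α => ?_
    refine ((hred α).2 X hX).2 fun Q hQ => ?_
    obtain ⟨Y, hY, hYX⟩ := h Q (Set.mem_iUnion.2 ⟨α, hQ⟩)
    exact ⟨Y, Set.mem_iInter.1 hY α, hYX⟩
  constructor
  · right
    intro X hX
    constructor
    · intro h Q
      exact ⟨X, h, rfl⟩
    · intro h
      exact key X hX fun Q _ => h Q
  · refine ⟨?_, ?_⟩
    · obtain ⟨α⟩ := ‹Nonempty I›
      obtain ⟨Q, hQ⟩ := (hred α).1
      exact ⟨Q, Set.mem_iUnion.2 ⟨α, hQ⟩⟩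
    · intro X hX
      exact ⟨fun h Q _ => ⟨X, h, rfl⟩, key X hX⟩
end

section
/- A set 𝒞 ⊆ 𝒳 is 𝒫-sensitive with reduction set 𝒬 if and only if 𝒞 is 𝒬-stable, i.e., 𝒞 contains every X ∈ 𝒳 for which there exists a family (X^Q)_{Q∈𝒬} ⊆ 𝒞 with j_Q(X) = j_Q(X^Q) for all Q ∈ 𝒬. -/
open MeasureTheory Filter Set

variable {Ω : Type*} [MeasurableSpace Ω]

/-- `𝒞` is `𝒬`-stable in `𝒳`: it contains every aggregator in `𝒳` of every
`𝒬`-coherent family of members of `𝒞`. -/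
def QStable (𝔓 : Set (Measure Ω)) (𝒳 𝒞 : Set (L0c 𝔓)) (𝒬 : Set (PcM 𝔓)) : Prop :=
  ∀ X ∈ 𝒳,
    (∃ XQ : PcM 𝔓 → L0c 𝔓, (∀ Q ∈ 𝒬, XQ Q ∈ 𝒞) ∧ ∀ Q ∈ 𝒬, jQ Q X = jQ Q (XQ Q)) →
    X ∈ 𝒞

theorem reduction_iff_stable {Ω : Type*} [MeasurableSpace Ω]
    (𝔓 : Set (Measure Ω)) (h𝔓 : 𝔓.Nonempty) (hprob : ∀ P ∈ 𝔓, IsProbabilityMeasure P)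
    (𝒳 : Set (L0c 𝔓)) (h𝒳 : 𝒳.Nonempty) (𝒞 : Set (L0c 𝔓)) (h𝒞𝒳 : 𝒞 ⊆ 𝒳)
    (𝒬 : Set (PcM 𝔓)) (h𝒬 : 𝒬.Nonempty) :
    IsReductionSet 𝔓 𝒳 𝒞 𝒬 ↔ QStable 𝔓 𝒳 𝒞 𝒬 := by
  constructor
  · rintro ⟨-, hred⟩ X hX ⟨XQ, hXQC, hXQj⟩
    exact (hred X hX).2 fun Q hQ => (hXQj Q hQ) ▸ ⟨XQ Q, hXQC Q hQ, rfl⟩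
  · intro hst
    refine ⟨h𝒬, fun X hX => ⟨fun hXC Q _ => ⟨X, hXC, rfl⟩, fun h => ?_⟩⟩
    choose Y hY hjY using fun Q (hQ : Q ∈ 𝒬) => h Q hQ
    classical
    refine hst X hX ⟨fun Q => if hQ : Q ∈ 𝒬 then Y Q hQ else X, fun Q hQ => ?_, fun Q hQ => ?_⟩
    · simp [hQ, hY Q hQ]
    · simp [hQ, (hjY Q hQ).symm]
end

section
/- A function f : 𝒳 → [-∞,∞] admits a 𝒬-localization (a 𝒬-consistent family (f^Q)_{Q∈𝒬} with f = sup_{Q∈𝒬} f^Q) if and only if f is 𝒫-sensitive with reduction set 𝒬. In that case f = f^𝒬_E, where f^𝒬_E(X) := sup_{Q∈𝒬} inf{f(Y) : Y ∈ 𝒳, j_Q(Y)=j_Q(X)}. -/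
open MeasureTheory Filter Set

variable {Ω : Type*} [MeasurableSpace Ω]

theorem localization_iff_pSensitive {Ω : Type*} [MeasurableSpace Ω]
    (𝔓 : Set (Measure Ω)) (h𝔓 : 𝔓.Nonempty) (hprob : ∀ P ∈ 𝔓, IsProbabilityMeasure P)
    (𝒳 : Set (L0c 𝔓)) (h𝒳 : 𝒳.Nonempty)
    (𝒬 : Set (PcM 𝔓)) (h𝒬 : 𝒬.Nonempty) (f : L0c 𝔓 → EReal) :
    ((∃ g : PcM 𝔓 → L0c 𝔓 → EReal,
        (∀ Q ∈ 𝒬, ∀ X ∈ 𝒳, ∀ Y ∈ 𝒳, jQ Q X = jQ Q Y → g Q X = g Q Y) ∧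
        (∀ X ∈ 𝒳, f X = ⨆ Q ∈ 𝒬, g Q X)) ↔
      (∀ r : ℝ, ∀ X ∈ 𝒳,
        (f X ≤ (r : EReal) ↔
          ∀ Q ∈ 𝒬, ∃ Y ∈ 𝒳, f Y ≤ (r : EReal) ∧ jQ Q Y = jQ Q X))) ∧
    ((∀ r : ℝ, ∀ X ∈ 𝒳,
        (f X ≤ (r : EReal) ↔
          ∀ Q ∈ 𝒬, ∃ Y ∈ 𝒳, f Y ≤ (r : EReal) ∧ jQ Q Y = jQ Q X)) →
      ∀ X ∈ 𝒳, f X = ⨆ Q ∈ 𝒬, ⨅ Y ∈ {Y | Y ∈ 𝒳 ∧ jQ Q Y = jQ Q X}, f Y) := by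

  classical
  have key : (∀ r : ℝ, ∀ X ∈ 𝒳,
        (f X ≤ (r : EReal) ↔
          ∀ Q ∈ 𝒬, ∃ Y ∈ 𝒳, f Y ≤ (r : EReal) ∧ jQ Q Y = jQ Q X)) →
      ∀ X ∈ 𝒳, f X = ⨆ Q ∈ 𝒬, ⨅ Y ∈ {Y | Y ∈ 𝒳 ∧ jQ Q Y = jQ Q X}, f Y := by
    intro hsens X hX
    apply le_antisymm
    · by_contra h
      push_neg at h
      obtain ⟨r, hr1, hr2⟩ := EReal.exists_between_coe_real h
      have : f X ≤ (r : EReal) := by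
        rw [hsens r X hX]
        intro Q hQ
        have hlt : (⨅ Y ∈ {Y | Y ∈ 𝒳 ∧ jQ Q Y = jQ Q X}, f Y) < (r : EReal) :=
          lt_of_le_of_lt (le_iSup₂ (f := fun Q _ =>
            ⨅ Y ∈ {Y | Y ∈ 𝒳 ∧ jQ Q Y = jQ Q X}, f Y) Q hQ) hr1
        rw [iInf_lt_iff] at hlt
        obtain ⟨Y, hY⟩ := hlt
        rw [iInf_lt_iff] at hY
        obtain ⟨⟨hY1, hY2⟩, hY3⟩ := hY
        exact ⟨Y, hY1, hY3.le, hY2⟩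
      exact absurd hr2 (not_lt.2 this)
    · refine iSup₂_le fun Q hQ => ?_
      exact iInf₂_le X ⟨hX, rfl⟩
  refine ⟨⟨?_, ?_⟩, key⟩
  · rintro ⟨g, hg1, hg2⟩ r X hX
    constructor
    · intro h Q hQ
      exact ⟨X, hX, h, rfl⟩
    · intro h
      rw [hg2 X hX]
      refine iSup₂_le fun Q hQ => ?_
      obtain ⟨Y, hY1, hY2, hY3⟩ := h Q hQ
      calc g Q X = g Q Y := hg1 Q hQ X hX Y hY1 hY3.symm
        _ ≤ ⨆ Q ∈ 𝒬, g Q Y := le_iSup₂ (f := fun Q _ => g Q Y) Q hQ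
        _ = f Y := (hg2 Y hY1).symm
        _ ≤ (r : EReal) := hY2
  · intro hsens
    refine ⟨fun Q X => ⨅ Y ∈ {Y | Y ∈ 𝒳 ∧ jQ Q Y = jQ Q X}, f Y, ?_, key hsens⟩
    intro Q hQ X hX Y hY hXY
    have : {Z | Z ∈ 𝒳 ∧ jQ Q Z = jQ Q X} = {Z | Z ∈ 𝒳 ∧ jQ Q Z = jQ Q Y} := by
      ext Z; simp [hXY]
    dsimp only
    rw [this]
end

section
/- Let 𝒳 = L⁰_c be Dedekind complete and 𝒬 ⊆ 𝔓_c(Ω) nonempty with every Q ∈ 𝒬 supported with support S(Q). If a family (X^Q)_{Q∈𝒬} ⊆ 𝒳 is pairwise 𝒬-coherent (X^Q 𝟙_{S(Q)∩S(Q')} = X^{Q'} 𝟙_{S(Q)∩S(Q')} for all Q,Q' ∈ 𝒬) and bounded (there is Y ∈ 𝒳 with |X^Q| 𝟙_{S(Q)} ≼ Y for all Q), then there exists X ∈ 𝒳 with j_Q(X) = j_Q(X^Q) for all Q ∈ 𝒬. -/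
open MeasureTheory Filter Set

variable {Ω : Type*} [MeasurableSpace Ω]

/-- `S` is an (order) support of `Q ∈ 𝔓_c(Ω)`. -/
def IsSupport (𝔓 : Set (Measure Ω)) (Q : PcM 𝔓) (S : Set Ω) : Prop :=
  MeasurableSet S ∧ Q.1 Sᶜ = 0 ∧ ∀ N : Set Ω, Q.1 N = 0 → ∀ P ∈ 𝔓, P (N ∩ S) = 0

theorem pairwise_coherent_aggregation {Ω : Type*} [MeasurableSpace Ω]
    (𝔓 : Set (Measure Ω)) (h𝔓 : 𝔓.Nonempty) (hprob : ∀ P ∈ 𝔓, IsProbabilityMeasure P)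
    (hDC : ∀ D : Set (L0c 𝔓), D.Nonempty → (∃ b, ∀ x ∈ D, qsLe x b) →
      ∃ l, (∀ x ∈ D, qsLe x l) ∧ ∀ u, (∀ x ∈ D, qsLe x u) → qsLe l u)
    (𝒬 : Set (PcM 𝔓)) (h𝒬 : 𝒬.Nonempty)
    (Ssupp : PcM 𝔓 → Set Ω) (hsupp : ∀ Q ∈ 𝒬, IsSupport 𝔓 Q (Ssupp Q))
    (XQ : PcM 𝔓 → L0c 𝔓)
    (hpair : ∀ Q ∈ 𝒬, ∀ Q' ∈ 𝒬,
      L0c.mulInd (Ssupp Q ∩ Ssupp Q') (XQ Q) = L0c.mulInd (Ssupp Q ∩ Ssupp Q') (XQ Q'))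
    (hbdd : ∃ Y : L0c 𝔓, ∀ Q ∈ 𝒬, qsLe (L0c.mulInd (Ssupp Q) (XQ Q).abs) Y) :
    ∃ X : L0c 𝔓, ∀ Q ∈ 𝒬, jQ Q X = jQ Q (XQ Q) := by
  classical
  obtain ⟨Y, hY⟩ := hbdd
  obtain ⟨Q0, hQ0⟩ := h𝒬
  set y : Ω → ℝ := Quotient.out Y with hy
  have hYout : Quotient.mk (qsSetoid 𝔓) y = Y := Quotient.out_eq Y
  set x : PcM 𝔓 → Ω → ℝ := fun Q => Quotient.out (XQ Q) with hxdef
  have hx : ∀ Q, Quotient.mk (qsSetoid 𝔓) (x Q) = XQ Q := fun Q => Quotient.out_eq _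
  -- (a) : the bound at the level of representatives
  have ha : ∀ Q ∈ 𝒬, ∀ P ∈ 𝔓, (Ssupp Q).indicator (fun ω => |x Q ω|) ≤ᵐ[P] y := by
    intro Q hQ
    have h := hY Q hQ
    rw [← hx Q, ← hYout] at h
    exact h
  -- (b) : y is nonnegative q.s.
  have hy0 : ∀ P ∈ 𝔓, (fun _ => (0 : ℝ)) ≤ᵐ[P] y := by
    intro P hP
    filter_upwards [ha Q0 hQ0 P hP] with ω h
    exact le_trans (Set.indicator_nonneg (fun ω _ => abs_nonneg _) ω) h
  set z : PcM 𝔓 → Ω → ℝ := fun Q ω => if ω ∈ Ssupp Q then x Q ω else - y ω with hz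
  -- z Q is bounded above by y q.s.
  have hzY : ∀ Q ∈ 𝒬, ∀ P ∈ 𝔓, z Q ≤ᵐ[P] y := by
    intro Q hQ P hP
    filter_upwards [ha Q hQ P hP, hy0 P hP] with ω h1 h2
    by_cases hmem : ω ∈ Ssupp Q
    · simp only [hz, if_pos hmem]
      calc x Q ω ≤ |x Q ω| := le_abs_self _
        _ = (Ssupp Q).indicator (fun ω => |x Q ω|) ω := (Set.indicator_of_mem hmem (fun ω => |x Q ω|)).symm
        _ ≤ y ω := h1
    · simp only [hz, if_neg hmem]
      linarith
  set D : Set (L0c 𝔓) := {d | ∃ Q ∈ 𝒬, d = Quotient.mk (qsSetoid 𝔓) (z Q)} with hD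
  have hbound : ∀ d ∈ D, qsLe d Y := by
    rintro d ⟨Q, hQ, rfl⟩
    rw [← hYout]
    exact hzY Q hQ
  obtain ⟨l, hl, hl2⟩ := hDC D ⟨_, ⟨Q0, hQ0, rfl⟩⟩ ⟨Y, hbound⟩
  set ℓ : Ω → ℝ := Quotient.out l with hℓ
  have hlout : Quotient.mk (qsSetoid 𝔓) ℓ = l := Quotient.out_eq l
  have hzl : ∀ Q ∈ 𝒬, ∀ P ∈ 𝔓, z Q ≤ᵐ[P] ℓ := by
    intro Q hQ
    have h := hl _ ⟨Q, hQ, rfl⟩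
    rw [← hlout] at h
    exact h
  -- pairwise coherence at the level of representatives
  have hpair' : ∀ Q ∈ 𝒬, ∀ Q' ∈ 𝒬, ∀ P ∈ 𝔓,
      (Ssupp Q ∩ Ssupp Q').indicator (x Q) =ᵐ[P] (Ssupp Q ∩ Ssupp Q').indicator (x Q') := by
    intro Q hQ Q' hQ'
    have h := hpair Q hQ Q' hQ'
    rw [← hx Q, ← hx Q'] at h
    exact Quotient.exact h
  -- from q.s. inequality to Q-a.e. inequality
  have qsToQ : ∀ (Q : PcM 𝔓) (f g : Ω → ℝ), (∀ P ∈ 𝔓, f ≤ᵐ[P] g) → f ≤ᵐ[Q.1] g :=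
    fun Q f g h => ae_iff.2 (Q.2.2 _ fun P hP => ae_iff.1 (h P hP))
  refine ⟨l, ?_⟩
  intro Q' hQ'
  set v : Ω → ℝ := fun ω => if ω ∈ Ssupp Q' then x Q' ω else ℓ ω with hv
  have hub : ∀ d ∈ D, qsLe d (Quotient.mk (qsSetoid 𝔓) v) := by
    rintro d ⟨Q, hQ, rfl⟩
    show ∀ P ∈ 𝔓, z Q ≤ᵐ[P] v
    intro P hP
    filter_upwards [hpair' Q hQ Q' hQ' P hP, ha Q' hQ' P hP, hzl Q hQ P hP] with ω h1 h2 h3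
    by_cases hm' : ω ∈ Ssupp Q'
    · simp only [hv, if_pos hm']
      by_cases hm : ω ∈ Ssupp Q
      · have he : x Q ω = x Q' ω := by
          rwa [Set.indicator_of_mem (Set.mem_inter hm hm') (x Q),
            Set.indicator_of_mem (Set.mem_inter hm hm') (x Q')] at h1
        simp only [hz, if_pos hm]
        rw [he]
      · simp only [hz, if_neg hm]
        rw [Set.indicator_of_mem hm' (fun ω => |x Q' ω|)] at h2
        have := neg_abs_le (x Q' ω)
        linarith
    · simp only [hv, if_neg hm']
      exact h3
  have hlv : ∀ P ∈ 𝔓, ℓ ≤ᵐ[P] v := by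
    have h := hl2 _ hub
    rw [← hlout] at h
    exact h
  have h1 : ℓ ≤ᵐ[Q'.1] v := qsToQ Q' _ _ hlv
  have h2 : z Q' ≤ᵐ[Q'.1] ℓ := qsToQ Q' _ _ (hzl Q' hQ')
  have hS : ∀ᵐ ω ∂Q'.1, ω ∈ Ssupp Q' := by
    have h0 : Q'.1 (Ssupp Q')ᶜ = 0 := (hsupp Q' hQ').2.1
    exact ae_iff.2 h0
  have heq : ℓ =ᵐ[Q'.1] x Q' := by
    filter_upwards [h1, h2, hS] with ω hA hB hC
    simp only [hz, hv, if_pos hC] at hA hB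
    linarith
  rw [← hlout, ← hx Q']
  exact Quotient.sound heq
end

section
/- Let ρ : L^∞_c → ℝ be a monetary risk measure (monotone and cash-additive) with acceptance set 𝒜_ρ = {X : ρ(X) ≤ 0}, and Q ∈ 𝔓_c(Ω). Define ρ^Q_E(X) := inf{ρ(Y) : Y ∈ L^∞_c, j_Q(Y)=j_Q(X)}. Then the following are equivalent: (i) ρ^Q_E is a real-valued monetary risk measure; (ii) ρ^Q_E(0) ∈ ℝ; (iii) sup{m ∈ ℝ : the constant m lies in j_Q(𝒜_ρ)} < ∞. -/
open MeasureTheory Filter Set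

variable {Ω : Type*} [MeasurableSpace Ω]

/-- `ρ^Q_E(X) = inf { ρ(Y) : Y ∈ L^∞_c, j_Q(Y) = j_Q(X) }`, valued in `[-∞,∞]`. -/
noncomputable def rhoQE {Ω : Type*} [MeasurableSpace Ω] {𝔓 : Set (Measure Ω)}
    (ρ : L0c 𝔓 → ℝ) (Q : PcM 𝔓) (X : L0c 𝔓) : EReal :=
  ⨅ Y ∈ {Y | Y ∈ Linftyc 𝔓 ∧ jQ Q Y = jQ Q X}, (ρ Y : EReal)


section AuxLemmas

variable {Ω : Type*} [MeasurableSpace Ω] {𝔓 : Set (Measure Ω)}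

private lemma const_mem_Linftyc (𝔓 : Set (Measure Ω)) (m : ℝ) :
    L0c.const 𝔓 m ∈ Linftyc 𝔓 := by
  refine ⟨|m| + 1, by positivity, ?_⟩
  show ∀ P ∈ 𝔓, (fun ω => |(fun _ : Ω => m) ω|) ≤ᵐ[P] fun _ => |m| + 1
  exact fun P _ => Eventually.of_forall fun ω => (lt_add_one |m|).le

private lemma add_mem_Linftyc {X Y : L0c 𝔓} (hX : X ∈ Linftyc 𝔓) (hY : Y ∈ Linftyc 𝔓) :
    X.add Y ∈ Linftyc 𝔓 := by
  obtain ⟨x, rfl⟩ := Quotient.exists_rep X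
  obtain ⟨y, rfl⟩ := Quotient.exists_rep Y
  obtain ⟨a, ha, hXa⟩ := hX
  obtain ⟨b, hb, hYb⟩ := hY
  refine ⟨a + b, by linarith, ?_⟩
  show ∀ P ∈ 𝔓, (fun ω => |x ω + y ω|) ≤ᵐ[P] fun _ => a + b
  intro P hP
  have h1 : (fun ω => |x ω|) ≤ᵐ[P] fun _ => a := hXa P hP
  have h2 : (fun ω => |y ω|) ≤ᵐ[P] fun _ => b := hYb P hP
  filter_upwards [h1, h2] with ω h1 h2
  calc |x ω + y ω| ≤ |x ω| + |y ω| := abs_add_le _ _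
    _ ≤ a + b := add_le_add h1 h2

private lemma neg_mem_Linftyc {X : L0c 𝔓} (hX : X ∈ Linftyc 𝔓) :
    L0c.smul (-1) X ∈ Linftyc 𝔓 := by
  obtain ⟨x, rfl⟩ := Quotient.exists_rep X
  obtain ⟨a, ha, hXa⟩ := hX
  refine ⟨a, ha, ?_⟩
  show ∀ P ∈ 𝔓, (fun ω => |(-1 : ℝ) * x ω|) ≤ᵐ[P] fun _ => a
  intro P hP
  have h1 : (fun ω => |x ω|) ≤ᵐ[P] fun _ => a := hXa P hP
  filter_upwards [h1] with ω h1
  simpa using h1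

private lemma jQ_mk_eq_iff (Q : PcM 𝔓) (x y : Ω → ℝ) :
    jQ Q (Quotient.mk (qsSetoid 𝔓) x) = jQ Q (Quotient.mk (qsSetoid 𝔓) y) ↔ x =ᵐ[Q.1] y :=
  ⟨fun h => Quotient.exact h, fun h => Quotient.sound h⟩

private lemma jQ_add_const {Q : PcM 𝔓} {X Y : L0c 𝔓} (h : jQ Q X = jQ Q Y) (m : ℝ) :
    jQ Q (X.add (L0c.const 𝔓 m)) = jQ Q (Y.add (L0c.const 𝔓 m)) := by
  obtain ⟨x, rfl⟩ := Quotient.exists_rep X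
  obtain ⟨y, rfl⟩ := Quotient.exists_rep Y
  have h' : x =ᵐ[Q.1] y := (jQ_mk_eq_iff Q x y).1 h
  refine (jQ_mk_eq_iff Q _ _).2 ?_
  filter_upwards [h'] with ω hω
  simp [hω]

private lemma add_const_cancel (X : L0c 𝔓) (m : ℝ) :
    (X.add (L0c.const 𝔓 m)).add (L0c.const 𝔓 (-m)) = X := by
  obtain ⟨x, rfl⟩ := Quotient.exists_rep X
  exact congrArg (Quotient.mk (qsSetoid 𝔓)) (funext fun ω => by ring)

private lemma const_add_const (𝔓 : Set (Measure Ω)) (a b : ℝ) :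
    (L0c.const 𝔓 a).add (L0c.const 𝔓 b) = L0c.const 𝔓 (a + b) :=
  congrArg (Quotient.mk (qsSetoid 𝔓)) (funext fun _ => rfl)

private lemma iInf_coe_add {ι : Sort*} [Nonempty ι] (g : ι → ℝ) (b : ℝ) :
    (⨅ i, ((g i + b : ℝ) : EReal)) = (⨅ i, ((g i : ℝ) : EReal)) + (b : EReal) := by
  set A := ⨅ i, ((g i : ℝ) : EReal) with hA
  have hAtop : A ≠ ⊤ :=
    ne_top_of_le_ne_top (EReal.coe_ne_top (g (Classical.arbitrary ι)))
      (iInf_le (fun i => ((g i : ℝ) : EReal)) (Classical.arbitrary ι))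
  have key : ∀ c : ℝ, A < (c : EReal) → ∃ i, g i < c := by
    intro c hc
    rw [hA] at hc
    obtain ⟨i, hi⟩ := iInf_lt_iff.1 hc
    exact ⟨i, by exact_mod_cast hi⟩
  rcases eq_or_ne A ⊥ with hbot | hbot
  · rw [hbot, EReal.bot_add, iInf_eq_bot]
    intro w hw
    rcases eq_or_ne w ⊤ with rfl | hwt
    · exact ⟨Classical.arbitrary ι, EReal.coe_lt_top _⟩
    · obtain ⟨i, hi⟩ := key (w.toReal - b)
        (by rw [hbot]; exact bot_lt_iff_ne_bot.2 (EReal.coe_ne_bot _))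
      refine ⟨i, ?_⟩
      have h2 : ((g i + b : ℝ) : EReal) < (w.toReal : EReal) := by
        exact_mod_cast (by linarith : g i + b < w.toReal)
      rwa [EReal.coe_toReal hwt (ne_of_gt hw)] at h2
  · obtain ⟨a, ha⟩ : ∃ a : ℝ, A = (a : EReal) :=
      ⟨A.toReal, (EReal.coe_toReal hAtop hbot).symm⟩
    have hle : ∀ i, a ≤ g i := by
      intro i
      have h1 : A ≤ ((g i : ℝ) : EReal) := hA ▸ iInf_le _ i
      rw [ha] at h1
      exact_mod_cast h1
    rw [ha, ← EReal.coe_add]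
    apply le_antisymm
    · apply le_of_forall_gt_imp_ge_of_dense
      intro w hw
      rcases eq_or_ne w ⊤ with rfl | hwt
      · exact le_top
      · have hwb : w ≠ ⊥ := ne_bot_of_gt hw
        have hcw : w = (w.toReal : EReal) := (EReal.coe_toReal hwt hwb).symm
        have hac : a + b < w.toReal := by
          rw [hcw] at hw; exact_mod_cast hw
        obtain ⟨i, hi⟩ := key (w.toReal - b)
          (by rw [ha]; exact_mod_cast (by linarith : a < w.toReal - b))
        refine le_trans (iInf_le _ i) ?_
        rw [hcw]
        exact_mod_cast (by linarith : g i + b ≤ w.toReal)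
    · exact le_iInf fun i => by exact_mod_cast (by linarith [hle i] : a + b ≤ g i + b)

private lemma rhoQE_eq_subtype (ρ : L0c 𝔓 → ℝ) (Q : PcM 𝔓) (X : L0c 𝔓) :
    rhoQE ρ Q X
      = ⨅ i : {Y : L0c 𝔓 // Y ∈ Linftyc 𝔓 ∧ jQ Q Y = jQ Q X}, ((ρ i.1 : ℝ) : EReal) :=
  iInf_subtype'

private lemma rhoQE_le (ρ : L0c 𝔓 → ℝ) (Q : PcM 𝔓) {X Y : L0c 𝔓}
    (hY : Y ∈ Linftyc 𝔓) (hj : jQ Q Y = jQ Q X) :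
    rhoQE ρ Q X ≤ ((ρ Y : ℝ) : EReal) :=
  iInf₂_le Y ⟨hY, hj⟩

private lemma le_rhoQE (ρ : L0c 𝔓 → ℝ) (Q : PcM 𝔓) {X : L0c 𝔓} {c : EReal}
    (h : ∀ Y, Y ∈ Linftyc 𝔓 → jQ Q Y = jQ Q X → c ≤ ((ρ Y : ℝ) : EReal)) :
    c ≤ rhoQE ρ Q X :=
  le_iInf₂ fun Y hY => h Y hY.1 hY.2

private lemma rhoQE_ne_top (ρ : L0c 𝔓 → ℝ) (Q : PcM 𝔓) {X : L0c 𝔓} (hX : X ∈ Linftyc 𝔓) :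
    rhoQE ρ Q X ≠ ⊤ :=
  ne_top_of_le_ne_top (EReal.coe_ne_top (ρ X)) (rhoQE_le ρ Q hX rfl)

private lemma rhoQE_cash (ρ : L0c 𝔓 → ℝ)
    (hcash : ∀ X ∈ Linftyc 𝔓, ∀ m : ℝ, ρ (X.add (L0c.const 𝔓 m)) = ρ X + m)
    (Q : PcM 𝔓) {X : L0c 𝔓} (hX : X ∈ Linftyc 𝔓) (m : ℝ) :
    rhoQE ρ Q (X.add (L0c.const 𝔓 m)) = rhoQE ρ Q X + (m : EReal) := by
  haveI : Nonempty {Y : L0c 𝔓 // Y ∈ Linftyc 𝔓 ∧ jQ Q Y = jQ Q X} := ⟨⟨X, hX, rfl⟩⟩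
  have main : rhoQE ρ Q (X.add (L0c.const 𝔓 m))
      = ⨅ i : {Y : L0c 𝔓 // Y ∈ Linftyc 𝔓 ∧ jQ Q Y = jQ Q X},
          ((ρ (i.1.add (L0c.const 𝔓 m)) : ℝ) : EReal) := ?_
  · calc rhoQE ρ Q (X.add (L0c.const 𝔓 m))
        = ⨅ i : {Y : L0c 𝔓 // Y ∈ Linftyc 𝔓 ∧ jQ Q Y = jQ Q X},
            ((ρ i.1 + m : ℝ) : EReal) := by
          rw [main]
          exact iInf_congr fun i => by rw [hcash i.1 i.2.1 m]
      _ = (⨅ i : {Y : L0c 𝔓 // Y ∈ Linftyc 𝔓 ∧ jQ Q Y = jQ Q X},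
            ((ρ i.1 : ℝ) : EReal)) + (m : EReal) := iInf_coe_add _ m
      _ = rhoQE ρ Q X + (m : EReal) := by rw [rhoQE_eq_subtype ρ Q X]
  apply le_antisymm
  · refine le_iInf fun i => ?_
    exact rhoQE_le ρ Q (add_mem_Linftyc i.2.1 (const_mem_Linftyc 𝔓 m)) (jQ_add_const i.2.2 m)
  · apply le_rhoQE
    intro Z hZ hj
    have hmem : Z.add (L0c.const 𝔓 (-m)) ∈ Linftyc 𝔓 :=
      add_mem_Linftyc hZ (const_mem_Linftyc 𝔓 (-m))
    have hjc : jQ Q (Z.add (L0c.const 𝔓 (-m))) = jQ Q X := by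
      have h1 := jQ_add_const hj (-m)
      rwa [add_const_cancel X m] at h1
    refine le_trans (iInf_le _ ⟨Z.add (L0c.const 𝔓 (-m)), hmem, hjc⟩) ?_
    rw [show ((Z.add (L0c.const 𝔓 (-m))).add (L0c.const 𝔓 m)) = Z from ?_]
    · obtain ⟨z, rfl⟩ := Quotient.exists_rep Z
      exact congrArg (Quotient.mk (qsSetoid 𝔓)) (funext fun ω => by ring)

private lemma rhoQE_mono (ρ : L0c 𝔓 → ℝ)
    (hmono : ∀ X ∈ Linftyc 𝔓, ∀ Y ∈ Linftyc 𝔓, qsLe X Y → ρ X ≤ ρ Y)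
    (Q : PcM 𝔓) {X Y : L0c 𝔓} (hX : X ∈ Linftyc 𝔓) (hY : Y ∈ Linftyc 𝔓)
    (hXY : qsLe X Y) : rhoQE ρ Q X ≤ rhoQE ρ Q Y := by
  apply le_rhoQE
  intro Z hZ hj
  set W := Z.add (X.add (L0c.smul (-1) Y)) with hW
  have hWmem : W ∈ Linftyc 𝔓 := add_mem_Linftyc hZ (add_mem_Linftyc hX (neg_mem_Linftyc hY))
  obtain ⟨x, rfl⟩ := Quotient.exists_rep X
  obtain ⟨y, rfl⟩ := Quotient.exists_rep Y
  obtain ⟨z, rfl⟩ := Quotient.exists_rep Z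
  have hjW : jQ Q W = jQ Q (Quotient.mk (qsSetoid 𝔓) x) := by
    have h' : z =ᵐ[Q.1] y := (jQ_mk_eq_iff Q z y).1 hj
    refine (jQ_mk_eq_iff Q _ _).2 ?_
    filter_upwards [h'] with ω hω
    show z ω + (x ω + (-1) * y ω) = x ω
    rw [hω]; ring
  have hWZ : qsLe W (Quotient.mk (qsSetoid 𝔓) z) := by
    show ∀ P ∈ 𝔓, (fun ω => z ω + (x ω + (-1) * y ω)) ≤ᵐ[P] z
    intro P hP
    have h1 : x ≤ᵐ[P] y := hXY P hP
    filter_upwards [h1] with ω h1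
    show z ω + (x ω + (-1) * y ω) ≤ z ω
    linarith
  calc rhoQE ρ Q (Quotient.mk (qsSetoid 𝔓) x) ≤ ((ρ W : ℝ) : EReal) := rhoQE_le ρ Q hWmem hjW
    _ ≤ ((ρ (Quotient.mk (qsSetoid 𝔓) z) : ℝ) : EReal) := by
        exact_mod_cast hmono W hWmem _ hZ hWZ

private lemma rhoQE_ne_bot (ρ : L0c 𝔓 → ℝ)
    (hmono : ∀ X ∈ Linftyc 𝔓, ∀ Y ∈ Linftyc 𝔓, qsLe X Y → ρ X ≤ ρ Y)
    (hcash : ∀ X ∈ Linftyc 𝔓, ∀ m : ℝ, ρ (X.add (L0c.const 𝔓 m)) = ρ X + m)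
    (Q : PcM 𝔓) (h0 : rhoQE ρ Q (L0c.const 𝔓 0) ≠ ⊥) {X : L0c 𝔓} (hX : X ∈ Linftyc 𝔓) :
    rhoQE ρ Q X ≠ ⊥ := by
  obtain ⟨b, hb, hXb⟩ := id hX
  intro hbot
  apply h0
  have key : rhoQE ρ Q (L0c.const 𝔓 0) ≤ rhoQE ρ Q X + (b : EReal) := by
    haveI : Nonempty {Y : L0c 𝔓 // Y ∈ Linftyc 𝔓 ∧ jQ Q Y = jQ Q X} := ⟨⟨X, hX, rfl⟩⟩
    have step : rhoQE ρ Q (L0c.const 𝔓 0)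
        ≤ ⨅ i : {Y : L0c 𝔓 // Y ∈ Linftyc 𝔓 ∧ jQ Q Y = jQ Q X},
            ((ρ i.1 + b : ℝ) : EReal) := ?_
    · calc rhoQE ρ Q (L0c.const 𝔓 0) ≤ _ := step
        _ = (⨅ i : {Y : L0c 𝔓 // Y ∈ Linftyc 𝔓 ∧ jQ Q Y = jQ Q X},
              ((ρ i.1 : ℝ) : EReal)) + (b : EReal) := iInf_coe_add _ b
        _ = rhoQE ρ Q X + (b : EReal) := by rw [rhoQE_eq_subtype ρ Q X]
    refine le_iInf fun i => ?_
    obtain ⟨Y, hY, hjY⟩ := i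
    set W := Y.add (L0c.smul (-1) X) with hWdef
    have hWmem : W ∈ Linftyc 𝔓 := add_mem_Linftyc hY (neg_mem_Linftyc hX)
    obtain ⟨x, rfl⟩ := Quotient.exists_rep X
    obtain ⟨y, rfl⟩ := Quotient.exists_rep Y
    have hjW : jQ Q W = jQ Q (L0c.const 𝔓 0) := by
      have h' : y =ᵐ[Q.1] x := (jQ_mk_eq_iff Q y x).1 hjY
      refine (jQ_mk_eq_iff Q _ _).2 ?_
      filter_upwards [h'] with ω hω
      show y ω + (-1) * x ω = 0
      rw [hω]; ring
    have hWY : qsLe W (L0c.add (Quotient.mk (qsSetoid 𝔓) y) (L0c.const 𝔓 b)) := by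
      show ∀ P ∈ 𝔓, (fun ω => y ω + (-1) * x ω) ≤ᵐ[P] fun ω => y ω + b
      intro P hP
      have h1 : (fun ω => |x ω|) ≤ᵐ[P] fun _ => b := hXb P hP
      filter_upwards [h1] with ω h1
      show y ω + (-1) * x ω ≤ y ω + b
      have := neg_abs_le (x ω)
      linarith
    have h2 : ρ W ≤ ρ (Quotient.mk (qsSetoid 𝔓) y) + b := by
      have h3 := hmono W hWmem _ (add_mem_Linftyc hY (const_mem_Linftyc 𝔓 b)) hWY
      rwa [hcash _ hY b] at h3
    calc rhoQE ρ Q (L0c.const 𝔓 0) ≤ ((ρ W : ℝ) : EReal) := rhoQE_le ρ Q hWmem hjW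
      _ ≤ _ := by exact_mod_cast h2
  rw [hbot, EReal.bot_add] at key
  exact le_bot_iff.1 key

end AuxLemmas

theorem rhoQE_relevant_tfae {Ω : Type*} [MeasurableSpace Ω]
    (𝔓 : Set (Measure Ω)) (h𝔓 : 𝔓.Nonempty) (hprob : ∀ P ∈ 𝔓, IsProbabilityMeasure P)
    (ρ : L0c 𝔓 → ℝ)
    (hmono : ∀ X ∈ Linftyc 𝔓, ∀ Y ∈ Linftyc 𝔓, qsLe X Y → ρ X ≤ ρ Y)
    (hcash : ∀ X ∈ Linftyc 𝔓, ∀ m : ℝ, ρ (X.add (L0c.const 𝔓 m)) = ρ X + m)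
    (Q : PcM 𝔓) :
    (((∀ X ∈ Linftyc 𝔓, rhoQE ρ Q X ≠ ⊤ ∧ rhoQE ρ Q X ≠ ⊥) ∧
      (∀ X ∈ Linftyc 𝔓, ∀ Y ∈ Linftyc 𝔓, qsLe X Y → rhoQE ρ Q X ≤ rhoQE ρ Q Y) ∧
      (∀ X ∈ Linftyc 𝔓, ∀ m : ℝ,
        rhoQE ρ Q (X.add (L0c.const 𝔓 m)) = rhoQE ρ Q X + (m : EReal))) ↔
      (rhoQE ρ Q (L0c.const 𝔓 0) ≠ ⊤ ∧ rhoQE ρ Q (L0c.const 𝔓 0) ≠ ⊥)) ∧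
    ((rhoQE ρ Q (L0c.const 𝔓 0) ≠ ⊤ ∧ rhoQE ρ Q (L0c.const 𝔓 0) ≠ ⊥) ↔
      sSup ((fun m : ℝ => (m : EReal)) ''
        {m : ℝ | jQ Q (L0c.const 𝔓 m) ∈ jQ Q '' {X | X ∈ Linftyc 𝔓 ∧ ρ X ≤ 0}}) < ⊤) := by
  have h0mem : L0c.const 𝔓 0 ∈ Linftyc 𝔓 := const_mem_Linftyc 𝔓 0
  constructor
  · constructor
    · rintro ⟨h1, -, -⟩
      exact h1 _ h0mem
    · rintro ⟨-, h0b⟩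
      exact ⟨fun X hX => ⟨rhoQE_ne_top ρ Q hX, rhoQE_ne_bot ρ hmono hcash Q h0b hX⟩,
        fun X hX Y hY h => rhoQE_mono ρ hmono Q hX hY h,
        fun X hX m => rhoQE_cash ρ hcash Q hX m⟩
  · have key : rhoQE ρ Q (L0c.const 𝔓 0) = ⊥ ↔
        sSup ((fun m : ℝ => (m : EReal)) ''
          {m : ℝ | jQ Q (L0c.const 𝔓 m) ∈ jQ Q '' {X | X ∈ Linftyc 𝔓 ∧ ρ X ≤ 0}}) = ⊤ := by
      constructor
      · intro hbot
        rw [sSup_eq_top]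
        intro w hw
        set m : ℝ := w.toReal + 1 with hm
        have hwm : w < (m : EReal) := by
          rcases eq_or_ne w ⊥ with rfl | hwb
          · exact bot_lt_iff_ne_bot.2 (EReal.coe_ne_bot _)
          · conv_lhs => rw [← EReal.coe_toReal (ne_of_lt hw) hwb]
            exact_mod_cast lt_add_one _
        refine ⟨(m : EReal), ⟨m, ?_, rfl⟩, hwm⟩
        have hlt : rhoQE ρ Q (L0c.const 𝔓 0) < ((-m : ℝ) : EReal) := by
          rw [hbot]; exact bot_lt_iff_ne_bot.2 (EReal.coe_ne_bot _)
        rw [rhoQE_eq_subtype] at hlt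
        obtain ⟨⟨Y, hY, hjY⟩, hρY⟩ := iInf_lt_iff.1 hlt
        have hρY' : ρ Y < -m := by exact_mod_cast hρY
        refine ⟨Y.add (L0c.const 𝔓 m), ⟨add_mem_Linftyc hY (const_mem_Linftyc 𝔓 m), ?_⟩, ?_⟩
        · rw [hcash Y hY m]; linarith
        · have h1 := jQ_add_const hjY m
          rwa [const_add_const 𝔓 0 m, zero_add] at h1
      · intro htop
        rw [rhoQE_eq_subtype, iInf_eq_bot]
        intro w hw
        rcases eq_or_ne w ⊤ with rfl | hwt
        · exact ⟨⟨L0c.const 𝔓 0, h0mem, rfl⟩, EReal.coe_lt_top _⟩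
        · have hwe : w = (w.toReal : EReal) := (EReal.coe_toReal hwt (ne_of_gt hw)).symm
          obtain ⟨e, ⟨m, hmT, rfl⟩, hce⟩ :=
            (sSup_eq_top.1 htop) ((-w.toReal : ℝ) : EReal) (EReal.coe_lt_top _)
          change ((-w.toReal : ℝ) : EReal) < (m : EReal) at hce
          have hce' : -w.toReal < m := by exact_mod_cast hce
          obtain ⟨X, ⟨hXL, hXρ⟩, hXj⟩ := hmT
          refine ⟨⟨X.add (L0c.const 𝔓 (-m)),
            add_mem_Linftyc hXL (const_mem_Linftyc 𝔓 (-m)), ?_⟩, ?_⟩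
          · have h1 := jQ_add_const hXj (-m)
            rwa [const_add_const 𝔓 m (-m), add_neg_cancel] at h1
          · show ((ρ (X.add (L0c.const 𝔓 (-m))) : ℝ) : EReal) < w
            rw [hcash X hXL (-m), hwe]
            exact_mod_cast (by linarith : ρ X + (-m) < w.toReal)
    constructor
    · rintro ⟨-, hb⟩
      exact lt_top_iff_ne_top.2 fun ht => hb (key.2 ht)
    · intro h
      exact ⟨rhoQE_ne_top ρ Q h0mem, fun hb => (lt_top_iff_ne_top.1 h) (key.1 hb)⟩
end

section
/- Suppose S satisfies NA(𝒫,S). Then for every X ∈ L^∞_c the superhedging price π(X|S) := inf{r ∈ ℝ : ∃H ∈ ℝ^d, X ≼ r + [HΔS]_c} is finite (π(X|S) > −∞) and attained: there exists H ∈ ℝ^d with X ≼ π(X|S) + [HΔS]_c. -/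
open MeasureTheory Filter Set

variable {Ω : Type*} [MeasurableSpace Ω]

/-- A one-period market model of dimension `d`: initial prices `S0 ∈ ℝ^d` and a
bounded, measurable, nonnegative terminal price vector `S1`. -/
structure MarketModel (Ω : Type*) [MeasurableSpace Ω] (d : ℕ) where
  S0 : Fin d → ℝ
  S1 : Ω → Fin d → ℝ
  meas : Measurable S1
  bdd : ∃ M : ℝ, ∀ ω i, |S1 ω i| ≤ M
  nonneg0 : ∀ i, 0 ≤ S0 i
  nonneg1 : ∀ ω i, 0 ≤ S1 ω i

/-- The gain `H ΔS = ∑ i, H i (S1 i − S0 i)` of a strategy `H ∈ ℝ^d`. -/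
def payoff {Ω : Type*} [MeasurableSpace Ω] {d : ℕ} (S : MarketModel Ω d)
    (H : Fin d → ℝ) (ω : Ω) : ℝ :=
  ∑ i, H i * (S.S1 ω i - S.S0 i)

/-- The class `[H ΔS]_c` in `L⁰_c`. -/
def payoffC {Ω : Type*} [MeasurableSpace Ω] (𝔓 : Set (Measure Ω)) {d : ℕ}
    (S : MarketModel Ω d) (H : Fin d → ℝ) : L0c 𝔓 :=
  Quotient.mk (qsSetoid 𝔓) (payoff S H)

/-- The robust no-arbitrage condition `NA(𝔓, S)`. -/
def NArob {Ω : Type*} [MeasurableSpace Ω] (𝔓 : Set (Measure Ω)) {d : ℕ}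
    (S : MarketModel Ω d) : Prop :=
  ∀ H : Fin d → ℝ, (∀ P ∈ 𝔓, ∀ᵐ ω ∂P, 0 ≤ payoff S H ω) →
    ∀ P ∈ 𝔓, ∀ᵐ ω ∂P, payoff S H ω = 0

/-- The no-arbitrage condition `NA(P, S)` under a single probability `P`. -/
def NAone {Ω : Type*} [MeasurableSpace Ω] (P : Measure Ω) {d : ℕ}
    (S : MarketModel Ω d) : Prop :=
  ∀ H : Fin d → ℝ, (∀ᵐ ω ∂P, 0 ≤ payoff S H ω) → ∀ᵐ ω ∂P, payoff S H ω = 0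

/-- The `𝔓`-superhedging functional, valued in `[-∞,∞]`. -/
noncomputable def piE {Ω : Type*} [MeasurableSpace Ω] (𝔓 : Set (Measure Ω)) {d : ℕ}
    (S : MarketModel Ω d) (X : L0c 𝔓) : EReal :=
  sInf ((fun r : ℝ => (r : EReal)) ''
    {r : ℝ | ∃ H : Fin d → ℝ, qsLe X ((L0c.const 𝔓 r).add (payoffC 𝔓 S H))})


section Aux

open Topology

variable {Ω : Type*} [MeasurableSpace Ω] {d : ℕ}

lemma payoff_zero' (S : MarketModel Ω d) (ω : Ω) : payoff S (0 : Fin d → ℝ) ω = 0 := by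
  simp [payoff]

lemma payoff_add' (S : MarketModel Ω d) (H G : Fin d → ℝ) (ω : Ω) :
    payoff S (H + G) ω = payoff S H ω + payoff S G ω := by
  simp [payoff, add_mul, Finset.sum_add_distrib]

lemma payoff_smul' (S : MarketModel Ω d) (c : ℝ) (H : Fin d → ℝ) (ω : Ω) :
    payoff S (c • H) ω = c * payoff S H ω := by
  simp [payoff, Finset.mul_sum, mul_assoc]

lemma payoff_continuous' (S : MarketModel Ω d) (ω : Ω) :
    Continuous fun H : Fin d → ℝ => payoff S H ω := by
  unfold payoff
  exact continuous_finset_sum _ fun i _ => (continuous_apply i).mul continuous_const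

end Aux

open Topology

theorem superhedging_price_attained {Ω : Type*} [MeasurableSpace Ω]
    (𝔓 : Set (Measure Ω)) (h𝔓 : 𝔓.Nonempty) (hprob : ∀ P ∈ 𝔓, IsProbabilityMeasure P)
    (d : ℕ) (S : MarketModel Ω d) (hNA : NArob 𝔓 S) :
    ∀ X ∈ Linftyc 𝔓,
      {r : ℝ | ∃ H : Fin d → ℝ, qsLe X ((L0c.const 𝔓 r).add (payoffC 𝔓 S H))}.Nonempty ∧
      BddBelow {r : ℝ | ∃ H : Fin d → ℝ, qsLe X ((L0c.const 𝔓 r).add (payoffC 𝔓 S H))} ∧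
      ∃ H : Fin d → ℝ,
        qsLe X ((L0c.const 𝔓
          (sInf {r : ℝ | ∃ H' : Fin d → ℝ,
            qsLe X ((L0c.const 𝔓 r).add (payoffC 𝔓 S H'))})).add (payoffC 𝔓 S H)) := by
  intro X hX
  obtain ⟨x, rfl⟩ := Quotient.exists_rep X
  obtain ⟨m, hm0, hmle⟩ := hX
  have hmle' : ∀ P ∈ 𝔓, ∀ᵐ ω ∂P, |x ω| ≤ m := hmle
  set Hedge : ℝ → (Fin d → ℝ) → Prop :=
    fun r H => ∀ P ∈ 𝔓, ∀ᵐ ω ∂P, x ω ≤ r + payoff S H ω with hHedge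
  have key : ∀ (r : ℝ) (H : Fin d → ℝ),
      qsLe (Quotient.mk (qsSetoid 𝔓) x) ((L0c.const 𝔓 r).add (payoffC 𝔓 S H)) ↔ Hedge r H :=
    fun _ _ => Iff.rfl
  set R : Set ℝ := {r : ℝ | ∃ H : Fin d → ℝ, Hedge r H} with hR
  have hset : {r : ℝ | ∃ H : Fin d → ℝ,
      qsLe (Quotient.mk (qsSetoid 𝔓) x) ((L0c.const 𝔓 r).add (payoffC 𝔓 S H))} = R := rfl
  -- m is in R, via H = 0
  have hmR : m ∈ R := by
    refine ⟨0, fun P hP => ?_⟩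
    filter_upwards [hmle' P hP] with ω h
    rw [payoff_zero']
    linarith [(abs_le.mp h).2]
  have hRnon : R.Nonempty := ⟨m, hmR⟩
  -- lower bound
  have hlb : ∀ r ∈ R, -m ≤ r := by
    rintro r ⟨H, hH⟩
    by_contra hr
    push_neg at hr
    have hpos : ∀ P ∈ 𝔓, ∀ᵐ ω ∂P, 0 ≤ payoff S H ω := by
      intro P hP
      filter_upwards [hH P hP, hmle' P hP] with ω h1 h2
      have := (abs_le.mp h2).1
      linarith
    have hzero := hNA H hpos
    obtain ⟨P₀, hP₀⟩ := h𝔓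
    haveI := hprob P₀ hP₀
    have hFalse : ∀ᵐ ω ∂P₀, False := by
      filter_upwards [hH P₀ hP₀, hmle' P₀ hP₀, hzero P₀ hP₀] with ω h1 h2 h3
      have := (abs_le.mp h2).1
      rw [h3] at h1
      linarith
    obtain ⟨_, hf⟩ := hFalse.exists
    exact hf
  have hRbdd : BddBelow R := ⟨-m, hlb⟩
  -- the subspace of null strategies
  set V : Submodule ℝ (Fin d → ℝ) :=
    { carrier := {G | ∀ P ∈ 𝔓, ∀ᵐ ω ∂P, payoff S G ω = 0}
      add_mem' := by
        intro a b ha hb P hP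
        filter_upwards [ha P hP, hb P hP] with ω h1 h2
        rw [payoff_add', h1, h2, add_zero]
      zero_mem' := by
        intro P hP
        filter_upwards with ω
        exact payoff_zero' S ω
      smul_mem' := by
        intro c a ha P hP
        filter_upwards [ha P hP] with ω h1
        rw [payoff_smul', h1, mul_zero] } with hV
  obtain ⟨W, hVW⟩ := V.exists_isCompl
  -- boundedness of reduced hedging strategies
  have hbdd : ∃ C : ℝ, ∀ H ∈ W, ∀ r : ℝ, |r| ≤ m + 1 → Hedge r H → ‖H‖ ≤ C := by
    by_contra hcon
    push_neg at hcon
    have hseq : ∀ n : ℕ, ∃ p : (Fin d → ℝ) × ℝ,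
        p.1 ∈ W ∧ |p.2| ≤ m + 1 ∧ Hedge p.2 p.1 ∧ ((n : ℝ) + 1) < ‖p.1‖ := by
      intro n
      obtain ⟨H, hW, r, h1, h2, h3⟩ := hcon ((n : ℝ) + 1)
      exact ⟨(H, r), hW, h1, h2, h3⟩
    choose p hp1 hp2 hp3 hp4 using hseq
    have hnpos : ∀ n, (0 : ℝ) < ‖(p n).1‖ := fun n =>
      lt_trans (by positivity) (hp4 n)
    set G : ℕ → (Fin d → ℝ) := fun n => ‖(p n).1‖⁻¹ • (p n).1 with hG
    have hGmem : ∀ n, G n ∈ Metric.sphere (0 : Fin d → ℝ) 1 ∩ (W : Set (Fin d → ℝ)) := by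
      intro n
      constructor
      · rw [mem_sphere_zero_iff_norm, norm_smul, norm_inv, norm_norm,
          inv_mul_cancel₀ (hnpos n).ne']
      · exact W.smul_mem _ (hp1 n)
    have hcpt : IsCompact (Metric.sphere (0 : Fin d → ℝ) 1 ∩ (W : Set (Fin d → ℝ))) :=
      (isCompact_sphere 0 1).inter_right W.closed_of_finiteDimensional
    obtain ⟨Ginf, hGinf, φ, hφ, hconv⟩ := hcpt.tendsto_subseq hGmem
    have hge : ∀ P ∈ 𝔓, ∀ᵐ ω ∂P, 0 ≤ payoff S Ginf ω := by
      intro P hP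
      have hall : ∀ᵐ ω ∂P, ∀ n, x ω ≤ (p n).2 + payoff S (p n).1 ω :=
        ae_all_iff.mpr fun n => hp3 n P hP
      filter_upwards [hall, hmle' P hP] with ω h1 h2
      have hk : ∀ k : ℕ, -((2 * m + 1) * (((k : ℝ) + 1)⁻¹)) ≤ payoff S (G (φ k)) ω := by
        intro k
        have hxb := (abs_le.mp h2).1
        have hrb := (abs_le.mp (hp2 (φ k))).2
        have hb : -(2 * m + 1) ≤ payoff S ((p (φ k)).1) ω := by
          have := h1 (φ k); linarith
        have ha : ((k : ℝ) + 1) ≤ ‖(p (φ k)).1‖ := by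
          have h5 : (k : ℝ) ≤ (φ k : ℝ) := Nat.cast_le.mpr (hφ.le_apply)
          have := hp4 (φ k); linarith
        have hapos : (0 : ℝ) < ‖(p (φ k)).1‖ := hnpos (φ k)
        have hkpos : (0 : ℝ) < (k : ℝ) + 1 := by positivity
        have hinv : (‖(p (φ k)).1‖)⁻¹ ≤ ((k : ℝ) + 1)⁻¹ :=
          inv_anti₀ hkpos ha
        have hinvpos : (0 : ℝ) ≤ (‖(p (φ k)).1‖)⁻¹ := by positivity
        rw [hG, payoff_smul']
        calc -((2 * m + 1) * (((k : ℝ) + 1)⁻¹))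
            ≤ -((2 * m + 1) * (‖(p (φ k)).1‖)⁻¹) := by
              have hm1 : (0 : ℝ) ≤ 2 * m + 1 := by linarith
              have := mul_le_mul_of_nonneg_left hinv hm1
              linarith
          _ = (‖(p (φ k)).1‖)⁻¹ * (-(2 * m + 1)) := by ring
          _ ≤ (‖(p (φ k)).1‖)⁻¹ * payoff S ((p (φ k)).1) ω :=
              mul_le_mul_of_nonneg_left hb hinvpos
      have htend : Tendsto (fun k => payoff S (G (φ k)) ω) atTop (𝓝 (payoff S Ginf ω)) :=
        ((payoff_continuous' S ω).tendsto Ginf).comp hconv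
      have hzero : Tendsto (fun k : ℕ => -((2 * m + 1) * (((k : ℝ) + 1)⁻¹))) atTop
          (𝓝 (0 : ℝ)) := by
        have h0 : Tendsto (fun k : ℕ => ((k : ℝ) + 1)⁻¹) atTop (𝓝 (0 : ℝ)) := by
          simpa [one_div] using (tendsto_one_div_add_atTop_nhds_zero_nat :
            Tendsto (fun n : ℕ => 1 / ((n : ℝ) + 1)) atTop (𝓝 0))
        have := (h0.const_mul (2 * m + 1)).neg
        simpa using this
      exact le_of_tendsto_of_tendsto' hzero htend hk
    have hVmem : Ginf ∈ V := hNA Ginf hge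
    have hzero : Ginf = 0 :=
      Submodule.disjoint_def.mp hVW.disjoint Ginf hVmem hGinf.2
    have hone : ‖Ginf‖ = 1 := mem_sphere_zero_iff_norm.mp hGinf.1
    rw [hzero, norm_zero] at hone
    exact zero_ne_one hone
  obtain ⟨C, hC⟩ := hbdd
  set π : ℝ := sInf R with hπ
  have hπle : π ≤ m := csInf_le hRbdd hmR
  have hπge : -m ≤ π := le_csInf hRnon hlb
  have hrn : ∀ n : ℕ, ∃ r ∈ R, r < π + ((n : ℝ) + 1)⁻¹ := by
    intro n
    refine exists_lt_of_csInf_lt hRnon ?_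
    have : (0 : ℝ) < ((n : ℝ) + 1)⁻¹ := by positivity
    linarith
  choose r hrR hrlt using hrn
  have hrH : ∀ n, ∃ H, Hedge (r n) H := fun n => hrR n
  choose Hf hHf using hrH
  have hdec : ∀ n, ∃ v ∈ V, ∃ w ∈ W, v + w = Hf n := fun n =>
    by obtain ⟨a, b, ha, hb, hab⟩ := Submodule.codisjoint_iff_exists_add_eq.mp hVW.codisjoint (Hf n)
       exact ⟨a, ha, b, hb, hab⟩
  choose v hvV w hwW hvw using hdec
  have hrb : ∀ n, |r n| ≤ m + 1 := by
    intro n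
    rw [abs_le]
    constructor
    · have := hlb (r n) (hrR n); linarith
    · have h1 := hrlt n
      have h2 : ((n : ℝ) + 1)⁻¹ ≤ 1 := by
        rw [inv_le_one_iff₀]
        right
        simp [Nat.cast_nonneg]
      linarith
  have hHw : ∀ n, Hedge (r n) (w n) := by
    intro n P hP
    filter_upwards [hHf n P hP, hvV n P hP] with ω h1 h2
    have h3 : payoff S (Hf n) ω = payoff S (v n) ω + payoff S (w n) ω := by
      rw [← hvw n, payoff_add']
    rw [h3, h2] at h1
    linarith
  have hwball : ∀ n, w n ∈ Metric.closedBall (0 : Fin d → ℝ) C ∩ (W : Set (Fin d → ℝ)) := by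
    intro n
    exact ⟨mem_closedBall_zero_iff.mpr (hC (w n) (hwW n) (r n) (hrb n) (hHw n)), hwW n⟩
  have hcpt : IsCompact (Metric.closedBall (0 : Fin d → ℝ) C ∩ (W : Set (Fin d → ℝ))) :=
    (isCompact_closedBall 0 C).inter_right W.closed_of_finiteDimensional
  obtain ⟨Hinf, hHinf, φ, hφ, hconv⟩ := hcpt.tendsto_subseq hwball
  have hrt : Tendsto (fun k => r (φ k)) atTop (𝓝 π) := by
    have hup : Tendsto (fun k : ℕ => π + ((k : ℝ) + 1)⁻¹) atTop (𝓝 π) := by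
      have h0 : Tendsto (fun k : ℕ => ((k : ℝ) + 1)⁻¹) atTop (𝓝 (0 : ℝ)) := by
        simpa [one_div] using (tendsto_one_div_add_atTop_nhds_zero_nat :
            Tendsto (fun n : ℕ => 1 / ((n : ℝ) + 1)) atTop (𝓝 0))
      simpa using (tendsto_const_nhds.add h0)
    refine tendsto_of_tendsto_of_tendsto_of_le_of_le tendsto_const_nhds hup
      (fun k => csInf_le hRbdd (hrR (φ k))) ?_
    intro k
    have h1 := hrlt (φ k)
    have h2 : ((φ k : ℝ) + 1)⁻¹ ≤ ((k : ℝ) + 1)⁻¹ := by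
      have h3 : ((k : ℝ) + 1) ≤ ((φ k : ℝ) + 1) := by
        have : (k : ℝ) ≤ (φ k : ℝ) := Nat.cast_le.mpr hφ.le_apply
        linarith
      exact inv_anti₀ (by positivity) h3
    linarith
  refine ⟨hset ▸ hRnon, hset ▸ hRbdd, Hinf, ?_⟩
  rw [hset, key]
  intro P hP
  have hall : ∀ᵐ ω ∂P, ∀ n, x ω ≤ r n + payoff S (w n) ω :=
    ae_all_iff.mpr fun n => hHw n P hP
  filter_upwards [hall] with ω hω
  have htend : Tendsto (fun k => r (φ k) + payoff S (w (φ k)) ω) atTop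
      (𝓝 (π + payoff S Hinf ω)) :=
    hrt.add (((payoff_continuous' S ω).tendsto Hinf).comp hconv)
  exact ge_of_tendsto' htend fun k => hω (φ k)
end
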